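/- Let λ > 0, Δ ≥ 0, and let α > 1 be a real number. Let ℓ_{m,λ}(x) := (1/(2λ))·exp(−|x−m|/λ) denote the Laplace density with location m and scale λ. Then (α−1)⁻¹·ln ∫_ℝ ℓ_{0,λ}(x)^α · ℓ_{Δ,λ}(x)^{1−α} dx = (α−1)⁻¹·ln( (α/(2α−1))·exp((α−1)·Δ/λ) + ((α−1)/(2α−1))·exp(−α·Δ/λ) ). -/

import Mathlib

open MeasureTheory Real Set

noncomputable def laplacePDF (m lam x : ℝ) : ℝ :=
  (1 / (2 * lam)) * Real.exp (-|x - m| / lam)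

lemma integrableOn_exp_neg_mul_Ioi' {b : ℝ} (hb : 0 < b) (a : ℝ) :
    IntegrableOn (fun x : ℝ => Real.exp (-(b * x))) (Ioi a) := by
  simpa [neg_mul] using exp_neg_integrableOn_Ioi a hb

lemma integral_exp_neg_mul_Ioi' {b : ℝ} (hb : 0 < b) (a : ℝ) :
    ∫ x in Ioi a, Real.exp (-(b * x)) = Real.exp (-(b * a)) / b := by
  have h := integral_comp_mul_left_Ioi (fun x : ℝ => Real.exp (-x)) a hb
  simp only [smul_eq_mul] at h
  rw [h, integral_exp_neg_Ioi]
  ring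

lemma integrableOn_exp_mul_Iic' {b : ℝ} (hb : 0 < b) (a : ℝ) :
    IntegrableOn (fun x : ℝ => Real.exp (b * x)) (Iic a) := by
  have h : IntegrableOn (fun x : ℝ => Real.exp (-(b * x))) (Ici (-a)) := by
    rw [integrableOn_Ici_iff_integrableOn_Ioi]
    exact integrableOn_exp_neg_mul_Ioi' hb (-a)
  have hs : (Neg.neg ⁻¹' Iic a : Set ℝ) = Ici (-a) := by
    ext x; simp [neg_le]
  refine (MeasurePreserving.integrableOn_comp_preimage
    (Measure.measurePreserving_neg (volume : Measure ℝ))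
    (Homeomorph.neg ℝ).measurableEmbedding).mp ?_
  rw [hs]
  simpa [Function.comp_def, mul_neg] using h

lemma integral_exp_mul_Iic' {b : ℝ} (hb : 0 < b) (a : ℝ) :
    ∫ x in Iic a, Real.exp (b * x) = Real.exp (b * a) / b := by
  have h := integral_comp_neg_Ioi (c := -a) (f := fun x : ℝ => Real.exp (b * x))
  rw [neg_neg] at h
  rw [← h]
  simp only [mul_neg]
  rw [integral_exp_neg_mul_Ioi' hb, mul_neg, neg_neg]

lemma integral_exp_neg_mul_Ioc' {b : ℝ} (hb : 0 < b) {u v : ℝ} (huv : u ≤ v) :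
    ∫ x in Ioc u v, Real.exp (-(b * x)) = (Real.exp (-(b * u)) - Real.exp (-(b * v))) / b := by
  rw [← intervalIntegral.integral_of_le huv]
  have h := intervalIntegral.integral_comp_mul_left (a := u) (b := v)
    (fun x : ℝ => Real.exp x) (c := -b) (by linarith : (-b) ≠ 0)
  simp only [neg_mul, smul_eq_mul] at h
  rw [h, integral_exp, inv_neg, neg_mul]
  rw [eq_div_iff hb.ne']
  field_simp
  ring

theorem laplace_renyi_divergence (lam Δ α : ℝ) (hlam : 0 < lam) (hΔ : 0 ≤ Δ) (hα : 1 < α) :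
    (α - 1)⁻¹ * Real.log (∫ x : ℝ, laplacePDF 0 lam x ^ α * laplacePDF Δ lam x ^ (1 - α)) =
      (α - 1)⁻¹ * Real.log ((α / (2 * α - 1)) * Real.exp ((α - 1) * Δ / lam) +
        ((α - 1) / (2 * α - 1)) * Real.exp (-α * Δ / lam)) := by
  have h2a : (0:ℝ) < 2 * α - 1 := by linarith
  have hne : lam ≠ 0 := ne_of_gt hlam
  have hinv : (0:ℝ) < lam⁻¹ := inv_pos.mpr hlam
  have hb2 : (0:ℝ) < (2 * α - 1) / lam := div_pos h2a hlam
  set A : ℝ := (α - 1) * Δ / lam with hA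
  -- pointwise identity
  have hpt : ∀ x : ℝ, laplacePDF 0 lam x ^ α * laplacePDF Δ lam x ^ (1 - α)
      = (1 / (2 * lam)) * Real.exp (((α - 1) * |x - Δ| - α * |x|) / lam) := by
    intro x
    unfold laplacePDF
    have h2l : (0:ℝ) < 1 / (2 * lam) := by positivity
    rw [Real.mul_rpow h2l.le (exp_nonneg _), Real.mul_rpow h2l.le (exp_nonneg _),
      ← Real.exp_mul, ← Real.exp_mul, sub_zero]
    have : (1 / (2 * lam)) ^ α * Real.exp (-|x| / lam * α) *
        ((1 / (2 * lam)) ^ (1 - α) * Real.exp (-|x - Δ| / lam * (1 - α)))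
        = ((1 / (2 * lam)) ^ α * (1 / (2 * lam)) ^ (1 - α)) *
          (Real.exp (-|x| / lam * α) * Real.exp (-|x - Δ| / lam * (1 - α))) := by ring
    rw [this, ← Real.rpow_add h2l, ← Real.exp_add,
      show α + (1 - α) = 1 by ring, Real.rpow_one]
    congr 1
    rw [div_mul_eq_mul_div, div_mul_eq_mul_div, ← add_div]
    congr 1
    ring
  -- the three regional descriptions
  have e1 : EqOn (fun x : ℝ => (1 / (2 * lam)) * Real.exp (((α - 1) * |x - Δ| - α * |x|) / lam))
      (fun x : ℝ => (1 / (2 * lam)) * Real.exp A * Real.exp (lam⁻¹ * x)) (Iic 0) := by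
    intro x hx
    simp only [mem_Iic] at hx
    dsimp only
    rw [abs_of_nonpos hx, abs_of_nonpos (by linarith : x - Δ ≤ 0)]
    simp only [mul_assoc, ← Real.exp_add]
    congr 1
    rw [hA, inv_mul_eq_div, ← add_div]
    congr 1
    ring
  have e2 : EqOn (fun x : ℝ => (1 / (2 * lam)) * Real.exp (((α - 1) * |x - Δ| - α * |x|) / lam))
      (fun x : ℝ => (1 / (2 * lam)) * Real.exp A * Real.exp (-((2 * α - 1) / lam * x))) (Ioc 0 Δ) := by
    intro x hx
    simp only [mem_Ioc] at hx
    dsimp only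
    rw [abs_of_pos hx.1, abs_of_nonpos (by linarith [hx.2] : x - Δ ≤ 0)]
    simp only [mul_assoc, ← Real.exp_add]
    congr 1
    rw [hA, div_mul_eq_mul_div, ← neg_div, ← add_div]
    congr 1
    ring
  have e3 : EqOn (fun x : ℝ => (1 / (2 * lam)) * Real.exp (((α - 1) * |x - Δ| - α * |x|) / lam))
      (fun x : ℝ => (1 / (2 * lam)) * Real.exp (-A) * Real.exp (-(lam⁻¹ * x))) (Ioi Δ) := by
    intro x hx
    simp only [mem_Ioi] at hx
    dsimp only
    rw [abs_of_pos (lt_of_le_of_lt hΔ hx), abs_of_pos (by linarith : (0:ℝ) < x - Δ)]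
    simp only [mul_assoc, ← Real.exp_add]
    congr 1
    rw [hA, inv_mul_eq_div, ← neg_div, ← neg_div, ← add_div]
    congr 1
    ring
  -- integrability on pieces
  have i1 : IntegrableOn
      (fun x : ℝ => (1 / (2 * lam)) * Real.exp (((α - 1) * |x - Δ| - α * |x|) / lam)) (Iic 0) := by
    refine (IntegrableOn.congr_fun ?_ e1.symm measurableSet_Iic)
    exact ((integrableOn_exp_mul_Iic' hinv 0).const_mul _)
  have i2 : IntegrableOn
      (fun x : ℝ => (1 / (2 * lam)) * Real.exp (((α - 1) * |x - Δ| - α * |x|) / lam)) (Ioc 0 Δ) := by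
    refine (IntegrableOn.congr_fun ?_ e2.symm measurableSet_Ioc)
    exact (((integrableOn_exp_neg_mul_Ioi' hb2 0).mono_set Ioc_subset_Ioi_self).const_mul _)
  have i3 : IntegrableOn
      (fun x : ℝ => (1 / (2 * lam)) * Real.exp (((α - 1) * |x - Δ| - α * |x|) / lam)) (Ioi Δ) := by
    refine (IntegrableOn.congr_fun ?_ e3.symm measurableSet_Ioi)
    exact ((integrableOn_exp_neg_mul_Ioi' hinv Δ).const_mul _)
  -- compute the integral
  have key : (∫ x : ℝ, laplacePDF 0 lam x ^ α * laplacePDF Δ lam x ^ (1 - α))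
      = (α / (2 * α - 1)) * Real.exp ((α - 1) * Δ / lam) +
        ((α - 1) / (2 * α - 1)) * Real.exp (-α * Δ / lam) := by
    simp_rw [hpt]
    rw [← intervalIntegral.integral_Iic_add_Ioi i1 (by
      rw [← Ioc_union_Ioi_eq_Ioi hΔ]; exact i2.union i3)]
    rw [← Ioc_union_Ioi_eq_Ioi hΔ,
      setIntegral_union (Ioc_disjoint_Ioi le_rfl) measurableSet_Ioi i2 i3]
    rw [setIntegral_congr_fun measurableSet_Iic e1,
      setIntegral_congr_fun measurableSet_Ioc e2,
      setIntegral_congr_fun measurableSet_Ioi e3]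
    simp only [integral_const_mul]
    rw [integral_exp_mul_Iic' hinv 0, integral_exp_neg_mul_Ioc' hb2 hΔ,
      integral_exp_neg_mul_Ioi' hinv Δ]
    have hE1 : Real.exp A * Real.exp (-((2 * α - 1) / lam * Δ)) = Real.exp (-α * Δ / lam) := by
      rw [← Real.exp_add]; congr 1
      rw [hA, div_mul_eq_mul_div, ← neg_div, ← add_div, neg_mul]
      congr 1; ring
    have hE2 : Real.exp (-A) * Real.exp (-(lam⁻¹ * Δ)) = Real.exp (-α * Δ / lam) := by
      rw [← Real.exp_add]; congr 1
      rw [hA, inv_mul_eq_div, ← neg_div, ← neg_div, ← add_div, neg_mul]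
      congr 1; ring
    have hA' : Real.exp A = Real.exp ((α - 1) * Δ / lam) := rfl
    simp only [mul_zero, neg_zero, Real.exp_zero, one_div, inv_inv, div_inv_eq_mul, div_div_eq_mul_div]
    field_simp at hE1 hE2 ⊢
    have hA'' : Real.exp A = Real.exp (Δ * (α - 1) / lam) := by congr 1; rw [hA]; ring
    linear_combination (-1) * hE1 + (2*α-1) * hE2 + (2*α) * hA''
  rw [key]
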